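/- Let the common law P of (X, Rᴬ, Sᴬ, Rᴮ, Sᴮ) be such that each triple (X, Rᴬ, Sᴬ) and (X, Rᴮ, Sᴮ) satisfies the MAR condition and the ε-positivity condition, and let π̂ᴬ, μ̂ᴬ, π̂ᴮ, μ̂ᴮ : 𝒳 → ℝ be measurable nuisance estimates with 1 − π̂ᴬ(X) ≥ ε and 1 − π̂ᴮ(X) ≥ ε almost surely, all relevant differences lying in L²(P). Then | E[ ((1−Rᴬ)/(1−π̂ᴬ(X)))·(Sᴬ − μ̂ᴬ(X)) + μ̂ᴬ(X) − ((1−Rᴮ)/(1−π̂ᴮ(X)))·(Sᴮ − μ̂ᴮ(X)) − μ̂ᴮ(X) ] − Δᴬᴮ | ≤ (1/ε)·( ‖π̂ᴬ(X) − πᴬ(X)‖_{L²(P)}·‖μ̂ᴬ(X) − μ0ᴬ(X)‖_{L²(P)} + ‖π̂ᴮ(X) − πᴮ(X)‖_{L²(P)}·‖μ̂ᴮ(X) − μ0ᴮ(X)‖_{L²(P)} ), where Δᴬᴮ := E[Sᴬ − Sᴮ]. -/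

import Mathlib

open MeasureTheory ProbabilityTheory

lemma cs_helper {Ω : Type*} [MeasurableSpace Ω] (P : Measure Ω) (f g : Ω → ℝ)
    (hf : MemLp f 2 P) (hg : MemLp g 2 P) :
    ∫ ω, |f ω * g ω| ∂P ≤ (eLpNorm f 2 P).toReal * (eLpNorm g 2 P).toReal := by
  have h2 : (2:ℝ).HolderConjugate 2 := Real.HolderConjugate.two_two
  have hof : (ENNReal.ofReal (2:ℝ)) = 2 := by norm_num
  have hf2 : MemLp f (ENNReal.ofReal (2:ℝ)) P := by rwa [hof]
  have hg2 : MemLp g (ENNReal.ofReal (2:ℝ)) P := by rwa [hof]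
  have key := integral_mul_norm_le_Lp_mul_Lq h2 hf2 hg2
  have hfe : (eLpNorm f 2 P).toReal = (∫ a, ‖f a‖ ^ (2:ℝ) ∂P) ^ ((1:ℝ)/2) := by
    rw [hf.eLpNorm_eq_integral_rpow_norm two_ne_zero ENNReal.ofNat_ne_top]
    rw [ENNReal.toReal_ofReal (by positivity)]
    norm_num
  have hge : (eLpNorm g 2 P).toReal = (∫ a, ‖g a‖ ^ (2:ℝ) ∂P) ^ ((1:ℝ)/2) := by
    rw [hg.eLpNorm_eq_integral_rpow_norm two_ne_zero ENNReal.ofNat_ne_top]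
    rw [ENNReal.toReal_ofReal (by positivity)]
    norm_num
  rw [hfe, hge]
  calc ∫ ω, |f ω * g ω| ∂P = ∫ ω, ‖f ω‖ * ‖g ω‖ ∂P := by
        simp_rw [abs_mul, Real.norm_eq_abs]
    _ ≤ _ := key

lemma dr_bias_single {Ω 𝒳 : Type*} (m0 : MeasurableSpace Ω) [MeasurableSpace 𝒳]
    (P : Measure Ω) [IsProbabilityMeasure P]
    (X : Ω → 𝒳) (hX : Measurable X)
    (R S : Ω → ℝ) (hR : Measurable R) (hR01 : ∀ ω, R ω = 0 ∨ R ω = 1)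
    (hSmeas : Measurable S) (hSint : Integrable S P)
    (mX : MeasurableSpace Ω) (hmX : mX = MeasurableSpace.comap X inferInstance)
    (hMAR : P[fun ω => (1 - R ω) * S ω|mX]
      =ᵐ[P] fun ω => (P[fun ω' => 1 - R ω'|mX]) ω * (P[S|mX]) ω)
    (ε : ℝ) (hε : 0 < ε)
    (hpos : ∀ᵐ ω ∂P, (P[R|mX]) ω ≤ 1 - ε)
    (πX μ0X : Ω → ℝ)
    (hπX : πX = P[R|mX])
    (hμ0X : μ0X = fun ω => (P[fun ω' => (1 - R ω') * S ω'|mX]) ω / (1 - πX ω))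
    (πhat μhat : 𝒳 → ℝ) (hπhat : Measurable πhat) (hμhat : Measurable μhat)
    (hpos' : ∀ᵐ ω ∂P, ε ≤ 1 - πhat (X ω))
    (hL2π : MemLp (fun ω => πhat (X ω) - πX ω) 2 P)
    (hL2μ : MemLp (fun ω => μhat (X ω) - μ0X ω) 2 P) :
    Integrable (fun ω => (1 - R ω) / (1 - πhat (X ω)) * (S ω - μhat (X ω)) + μhat (X ω)) P ∧
    |(∫ ω, ((1 - R ω) / (1 - πhat (X ω)) * (S ω - μhat (X ω)) + μhat (X ω)) ∂P) - ∫ ω, S ω ∂P|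
      ≤ (1 / ε) * ((eLpNorm (fun ω => πhat (X ω) - πX ω) 2 P).toReal
          * (eLpNorm (fun ω => μhat (X ω) - μ0X ω) 2 P).toReal) := by
  classical
  have hm : mX ≤ m0 := by rw [hmX]; exact hX.comap_le
  haveI : SigmaFinite (P.trim hm) := by
    have : IsFiniteMeasure (P.trim hm) := isFiniteMeasure_trim hm
    infer_instance
  -- mX-measurability of compositions with X
  have hXmX : Measurable[mX] X := by
    rw [hmX]; exact Measurable.of_comap_le le_rfl
  have hπh_m : Measurable[mX] (fun ω => πhat (X ω)) := hπhat.comp hXmX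
  have hμh_m : Measurable[mX] (fun ω => μhat (X ω)) := hμhat.comp hXmX
  have hw_m : Measurable[mX] (fun ω => (1 - πhat (X ω))⁻¹) :=
    (measurable_const.sub hπh_m).inv
  -- basic a.e. facts
  have hεπ : ∀ᵐ ω ∂P, ε ≤ 1 - πX ω := by
    filter_upwards [hpos] with ω h using by rw [hπX]; linarith
  -- R bounds / integrability
  have hRint : Integrable R P := by
    refine Integrable.mono' (integrable_const 1) hR.aestronglyMeasurable ?_
    exact ae_of_all _ fun ω => by rcases hR01 ω with h | h <;> simp [h]
  have h1Rint : Integrable (fun ω => 1 - R ω) P := (integrable_const 1).sub hRint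
  have h1Rbd : ∀ ω, 0 ≤ 1 - R ω ∧ 1 - R ω ≤ 1 := fun ω => by
    rcases hR01 ω with h | h <;> constructor <;> simp [h]
  -- conditional expectation of 1 - R
  have h1R : P[fun ω' => 1 - R ω'|mX] =ᵐ[P] fun ω => 1 - πX ω := by
    have h1 : P[(fun _ => (1:ℝ)) - R|mX] =ᵐ[P] P[(fun _ => (1:ℝ))|mX] - P[R|mX] :=
      condExp_sub (integrable_const 1) hRint mX
    have h2 : P[(fun _ => (1:ℝ))|mX] = fun _ => (1:ℝ) := condExp_const hm (1:ℝ)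
    filter_upwards [h1] with ω hω
    have h3 : (fun ω' => 1 - R ω') = (fun _ => (1:ℝ)) - R := rfl
    rw [h3, hω, Pi.sub_apply, h2, hπX]
  -- (1 - πX) * μ0X = CE[(1-R)S]
  have hCE1 : (fun ω => (1 - πX ω) * μ0X ω)
      =ᵐ[P] P[fun ω' => (1 - R ω') * S ω'|mX] := by
    filter_upwards [hεπ] with ω hω
    rw [hμ0X]
    exact mul_div_cancel₀ _ (by linarith)
  -- CE[S|mX] = μ0X
  have hS_eq : P[S|mX] =ᵐ[P] μ0X := by
    filter_upwards [hMAR, hCE1, h1R, hεπ] with ω h1 h2 h3 h4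
    have hne : (1 : ℝ) - πX ω ≠ 0 := by linarith
    have h5 : (1 - πX ω) * μ0X ω = (1 - πX ω) * (P[S|mX]) ω := by
      rw [h2, h1, h3]
    exact (mul_left_cancel₀ hne h5).symm
  -- integrability of μ0X and μhat ∘ X
  have hCEint : Integrable (P[fun ω' => (1 - R ω') * S ω'|mX]) P := integrable_condExp
  have hπX_m : Measurable[mX] πX := by
    rw [hπX]; exact stronglyMeasurable_condExp.measurable
  have hμ0_mX : Measurable[mX] μ0X := by
    rw [hμ0X]
    exact stronglyMeasurable_condExp.measurable.div (measurable_const.sub hπX_m)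
  have hμ0_asm : AEStronglyMeasurable[m0] μ0X P :=
    (hμ0_mX.mono hm le_rfl).aestronglyMeasurable
  have hμ0int : Integrable μ0X P := by
    refine Integrable.mono' (hCEint.norm.const_mul ε⁻¹) hμ0_asm ?_
    filter_upwards [hεπ] with ω hω
    rw [hμ0X]
    have h1 : (0:ℝ) < 1 - πX ω := lt_of_lt_of_le hε hω
    rw [Real.norm_eq_abs, abs_div, abs_of_pos h1]
    calc |(P[fun ω' => (1 - R ω') * S ω'|mX]) ω| / (1 - πX ω)
        ≤ |(P[fun ω' => (1 - R ω') * S ω'|mX]) ω| / ε :=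
          div_le_div_of_nonneg_left (abs_nonneg _) hε hω
      _ = ε⁻¹ * ‖(P[fun ω' => (1 - R ω') * S ω'|mX]) ω‖ := by
          rw [Real.norm_eq_abs, div_eq_inv_mul]
  have hμhint : Integrable (fun ω => μhat (X ω)) P := by
    have h := (hL2μ.integrable one_le_two).add hμ0int
    have h2 : (fun ω => μhat (X ω)) = (fun ω => μhat (X ω) - μ0X ω) + μ0X := by
      funext ω; simp
    rw [h2]; exact h
  have hD : Integrable (fun ω => S ω - μhat (X ω)) P := hSint.sub hμhint
  -- weight bound
  have hw_bd : ∀ᵐ ω ∂P, |(1 - πhat (X ω))⁻¹| ≤ ε⁻¹ := by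
    filter_upwards [hpos'] with ω hω
    have h1 : (0:ℝ) < 1 - πhat (X ω) := lt_of_lt_of_le hε hω
    rw [abs_of_pos (inv_pos.mpr h1)]
    exact inv_anti₀ hε hω
  -- integrability of the weighted term
  have hgD_int : Integrable (fun ω => (1 - R ω) / (1 - πhat (X ω)) * (S ω - μhat (X ω))) P := by
    refine Integrable.mono' (hD.norm.const_mul ε⁻¹) ?_ ?_
    · exact (((measurable_const.sub hR).div
        (measurable_const.sub (hπhat.comp hX))).mul
        (hSmeas.sub (hμhat.comp hX))).aestronglyMeasurable
    · filter_upwards [hpos'] with ω hω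
      have h1 : (0:ℝ) < 1 - πhat (X ω) := lt_of_lt_of_le hε hω
      rw [Real.norm_eq_abs, abs_mul, abs_div]
      have hb : |1 - R ω| / |1 - πhat (X ω)| ≤ ε⁻¹ := by
        rw [abs_of_pos h1, abs_of_nonneg (h1Rbd ω).1, div_le_iff₀ h1]
        calc 1 - R ω ≤ 1 := (h1Rbd ω).2
          _ ≤ ε⁻¹ * (1 - πhat (X ω)) := by
              rw [← div_le_iff₀' (inv_pos.mpr hε), div_eq_mul_inv, inv_inv, one_mul]
              exact hω
      calc |1 - R ω| / |1 - πhat (X ω)| * |S ω - μhat (X ω)|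
          ≤ ε⁻¹ * |S ω - μhat (X ω)| :=
            mul_le_mul_of_nonneg_right hb (abs_nonneg _)
        _ = ε⁻¹ * ‖S ω - μhat (X ω)‖ := by rw [Real.norm_eq_abs]
  -- integrable pieces for conditional expectations
  have h1RS : Integrable (fun ω => (1 - R ω) * S ω) P := by
    refine Integrable.mono' hSint.norm
      ((measurable_const.sub hR).mul hSmeas).aestronglyMeasurable ?_
    refine ae_of_all _ fun ω => ?_
    rw [Real.norm_eq_abs, Real.norm_eq_abs, abs_mul]
    calc |1 - R ω| * |S ω| ≤ 1 * |S ω| :=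
          mul_le_mul_of_nonneg_right
            (by rw [abs_of_nonneg (h1Rbd ω).1]; exact (h1Rbd ω).2) (abs_nonneg _)
      _ = |S ω| := one_mul _
  have hμh1R_int : Integrable ((fun ω => μhat (X ω)) * fun ω => 1 - R ω) P := by
    refine Integrable.mono' hμhint.norm
      (((hμhat.comp hX).mul (measurable_const.sub hR)).aestronglyMeasurable) ?_
    refine ae_of_all _ fun ω => ?_
    simp only [Pi.mul_apply, Real.norm_eq_abs, abs_mul]
    calc |μhat (X ω)| * |1 - R ω| ≤ |μhat (X ω)| * 1 :=
          mul_le_mul_of_nonneg_left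
            (by rw [abs_of_nonneg (h1Rbd ω).1]; exact (h1Rbd ω).2) (abs_nonneg _)
      _ = |μhat (X ω)| := mul_one _
  have hh_int : Integrable (fun ω => (1 - R ω) * (S ω - μhat (X ω))) P := by
    have h2 : (fun ω => (1 - R ω) * (S ω - μhat (X ω)))
        = fun ω => (1 - R ω) * S ω - ((fun ω => μhat (X ω)) * fun ω => 1 - R ω) ω := by
      funext ω; simp only [Pi.mul_apply]; ring
    rw [h2]; exact h1RS.sub hμh1R_int
  have hwh_int : Integrable
      ((fun ω => (1 - πhat (X ω))⁻¹) * fun ω => (1 - R ω) * (S ω - μhat (X ω))) P := by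
    refine hgD_int.congr (ae_of_all _ fun ω => ?_)
    simp only [Pi.mul_apply]; ring
  -- pull-out properties
  have hPull1 : P[(fun ω => (1 - πhat (X ω))⁻¹) * fun ω => (1 - R ω) * (S ω - μhat (X ω))|mX]
      =ᵐ[P] (fun ω => (1 - πhat (X ω))⁻¹) * P[fun ω => (1 - R ω) * (S ω - μhat (X ω))|mX] :=
    condExp_mul_of_stronglyMeasurable_left hw_m.stronglyMeasurable hwh_int hh_int
  have hPull2 : P[(fun ω => μhat (X ω)) * fun ω => 1 - R ω|mX]
      =ᵐ[P] (fun ω => μhat (X ω)) * P[fun ω => 1 - R ω|mX] :=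
    condExp_mul_of_stronglyMeasurable_left hμh_m.stronglyMeasurable hμh1R_int h1Rint
  -- conditional expectation of h
  have hCEh : P[fun ω => (1 - R ω) * (S ω - μhat (X ω))|mX]
      =ᵐ[P] fun ω => (1 - πX ω) * (μ0X ω - μhat (X ω)) := by
    have hsplit : (fun ω => (1 - R ω) * (S ω - μhat (X ω)))
        =ᵐ[P] (fun ω => (1 - R ω) * S ω) - ((fun ω => μhat (X ω)) * fun ω => 1 - R ω) :=
      ae_of_all _ fun ω => by simp only [Pi.sub_apply, Pi.mul_apply]; ring
    have hc1 := condExp_congr_ae (μ := P) (m := mX) hsplit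
    have hc2 : P[(fun ω => (1 - R ω) * S ω) - ((fun ω => μhat (X ω)) * fun ω => 1 - R ω)|mX]
        =ᵐ[P] P[fun ω => (1 - R ω) * S ω|mX]
          - P[(fun ω => μhat (X ω)) * fun ω => 1 - R ω|mX] :=
      condExp_sub h1RS hμh1R_int mX
    filter_upwards [hc1, hc2, hCE1.symm, hPull2, h1R] with ω e1 e2 e3 e4 e5
    rw [e1, e2, Pi.sub_apply, e3, e4, Pi.mul_apply, e5]
    ring
  -- rewrite the first integral through the conditional expectation
  have hInt1 : ∫ ω, (1 - R ω) / (1 - πhat (X ω)) * (S ω - μhat (X ω)) ∂P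
      = ∫ ω, ((fun ω => (1 - πhat (X ω))⁻¹)
          * P[fun ω => (1 - R ω) * (S ω - μhat (X ω))|mX]) ω ∂P := by
    have e0 : ∫ ω, (1 - R ω) / (1 - πhat (X ω)) * (S ω - μhat (X ω)) ∂P
        = ∫ ω, ((fun ω => (1 - πhat (X ω))⁻¹)
            * fun ω => (1 - R ω) * (S ω - μhat (X ω))) ω ∂P :=
      integral_congr_ae (ae_of_all _ fun ω => by simp only [Pi.mul_apply]; ring)
    rw [e0, ← integral_condExp hm (f := (fun ω => (1 - πhat (X ω))⁻¹)
        * fun ω => (1 - R ω) * (S ω - μhat (X ω))), integral_congr_ae hPull1]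
  -- ∫ S = ∫ μ0X
  have hIntS : ∫ ω, S ω ∂P = ∫ ω, μ0X ω ∂P := by
    rw [← integral_condExp hm (f := S)]
    exact integral_congr_ae hS_eq
  -- the function A
  set A : Ω → ℝ := fun ω => (1 - πhat (X ω))⁻¹ * ((1 - πX ω) * (μ0X ω - μhat (X ω))) with hA
  have hCEh_int : Integrable (P[fun ω => (1 - R ω) * (S ω - μhat (X ω))|mX]) P :=
    integrable_condExp
  have hwCE_int : Integrable ((fun ω => (1 - πhat (X ω))⁻¹)
      * P[fun ω => (1 - R ω) * (S ω - μhat (X ω))|mX]) P := by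
    refine Integrable.mono' (hCEh_int.norm.const_mul ε⁻¹)
      (((hw_m.mono hm le_rfl).mul
        (stronglyMeasurable_condExp.mono hm).measurable).aestronglyMeasurable) ?_
    filter_upwards [hw_bd] with ω hω
    simp only [Pi.mul_apply, Real.norm_eq_abs, abs_mul]
    exact mul_le_mul_of_nonneg_right hω (abs_nonneg _)
  have hA_int : Integrable A P := by
    refine hwCE_int.congr ?_
    filter_upwards [hCEh] with ω hω
    simp only [Pi.mul_apply, hA]
    rw [hω]
  have hIntA : ∫ ω, (1 - R ω) / (1 - πhat (X ω)) * (S ω - μhat (X ω)) ∂P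
      = ∫ ω, A ω ∂P := by
    rw [hInt1]
    refine integral_congr_ae ?_
    filter_upwards [hCEh] with ω hω
    simp only [Pi.mul_apply, hA]
    rw [hω]
  -- product of the two L² functions
  have hfg_int : Integrable (fun ω => (πhat (X ω) - πX ω) * (μhat (X ω) - μ0X ω)) P := by
    have h1 : MemLp ((fun ω => πhat (X ω) - πX ω) • fun ω => μhat (X ω) - μ0X ω) 1 P :=
      hL2μ.smul hL2π
    have h2 := memLp_one_iff_integrable.mp h1
    refine h2.congr (ae_of_all _ fun ω => ?_)
    simp [Pi.smul_apply', smul_eq_mul]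
  -- G, the second-order remainder
  set G : Ω → ℝ := fun ω => A ω - (μ0X ω - μhat (X ω)) with hGdef
  have hG_eq : G =ᵐ[P] fun ω =>
      (πhat (X ω) - πX ω) * ((μ0X ω - μhat (X ω)) * (1 - πhat (X ω))⁻¹) := by
    filter_upwards [hpos'] with ω hω
    have hne : (1:ℝ) - πhat (X ω) ≠ 0 := by
      have := lt_of_lt_of_le hε hω; linarith
    simp only [hGdef, hA]
    field_simp
    ring
  have hG_bd : ∀ᵐ ω ∂P, ‖G ω‖
      ≤ ε⁻¹ * ‖(πhat (X ω) - πX ω) * (μhat (X ω) - μ0X ω)‖ := by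
    filter_upwards [hG_eq, hw_bd] with ω h1 h2
    rw [h1]
    simp only [Real.norm_eq_abs, abs_mul]
    calc |πhat (X ω) - πX ω| * (|μ0X ω - μhat (X ω)| * |(1 - πhat (X ω))⁻¹|)
        ≤ |πhat (X ω) - πX ω| * (|μ0X ω - μhat (X ω)| * ε⁻¹) := by
          apply mul_le_mul_of_nonneg_left _ (abs_nonneg _)
          exact mul_le_mul_of_nonneg_left h2 (abs_nonneg _)
      _ = ε⁻¹ * (|πhat (X ω) - πX ω| * |μhat (X ω) - μ0X ω|) := by
          rw [abs_sub_comm (μ0X ω)]; ring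
  have hfgnorm_int : Integrable
      (fun ω => ε⁻¹ * ‖(πhat (X ω) - πX ω) * (μhat (X ω) - μ0X ω)‖) P :=
    hfg_int.norm.const_mul ε⁻¹
  have hB_int : Integrable (fun ω => μ0X ω - μhat (X ω)) P := by
    exact hμ0int.sub hμhint
  have hG_int : Integrable G P := by exact hA_int.sub hB_int
  -- put the integrals together
  have hmain : (∫ ω, ((1 - R ω) / (1 - πhat (X ω)) * (S ω - μhat (X ω)) + μhat (X ω)) ∂P)
      - ∫ ω, S ω ∂P = ∫ ω, G ω ∂P := by
    rw [integral_add hgD_int hμhint, hIntA, hIntS]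
    have h1 : ∫ ω, G ω ∂P = (∫ ω, A ω ∂P) - ∫ ω, (μ0X ω - μhat (X ω)) ∂P := by
      exact integral_sub hA_int hB_int
    have h2 : ∫ ω, (μ0X ω - μhat (X ω)) ∂P
        = (∫ ω, μ0X ω ∂P) - ∫ ω, μhat (X ω) ∂P := integral_sub hμ0int hμhint
    rw [h1, h2]; ring
  refine ⟨hgD_int.add hμhint, ?_⟩
  rw [hmain]
  calc |∫ ω, G ω ∂P| ≤ ∫ ω, ‖G ω‖ ∂P := by
        rw [← Real.norm_eq_abs]; exact norm_integral_le_integral_norm G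
    _ ≤ ∫ ω, ε⁻¹ * ‖(πhat (X ω) - πX ω) * (μhat (X ω) - μ0X ω)‖ ∂P :=
        integral_mono_ae hG_int.norm hfgnorm_int hG_bd
    _ = ε⁻¹ * ∫ ω, |(πhat (X ω) - πX ω) * (μhat (X ω) - μ0X ω)| ∂P := by
        simp_rw [Real.norm_eq_abs]; rw [integral_const_mul]
    _ ≤ ε⁻¹ * ((eLpNorm (fun ω => πhat (X ω) - πX ω) 2 P).toReal
          * (eLpNorm (fun ω => μhat (X ω) - μ0X ω) 2 P).toReal) := by
        apply mul_le_mul_of_nonneg_left _ (inv_nonneg.mpr hε.le)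
        exact @cs_helper Ω m0 P _ _ hL2π hL2μ
    _ = (1 / ε) * _ := by rw [one_div]


/-- **The second-order bias bound `R₂(P̂, P)` in the proof of Theorem 3.2.**
For two abstaining classifiers A and B on common inputs X, each satisfying MAR and
ε-positivity, and nuisance estimates with `1 − π̂•(X) ≥ ε` a.s., the bias of the doubly
robust functional for the difference is bounded by the sum of the single-classifier
doubly robust bias bounds. -/
theorem dr_bias_bound_difference
    {Ω 𝒳 : Type*} [MeasurableSpace Ω] [MeasurableSpace 𝒳]
    (P : Measure Ω) [IsProbabilityMeasure P]
    (X : Ω → 𝒳) (hX : Measurable X)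
    (RA SA RB SB : Ω → ℝ)
    (hRA : Measurable RA) (hRB : Measurable RB)
    (hRA01 : ∀ ω, RA ω = 0 ∨ RA ω = 1) (hRB01 : ∀ ω, RB ω = 0 ∨ RB ω = 1)
    (hSAmeas : Measurable SA) (hSBmeas : Measurable SB)
    (hSAint : Integrable SA P) (hSBint : Integrable SB P)
    -- the σ-algebra generated by X
    (mX : MeasurableSpace Ω) (hmX : mX = MeasurableSpace.comap X inferInstance)
    -- MAR condition for each triple (X, R•, S•)
    (hMARA : P[fun ω => (1 - RA ω) * SA ω|mX]
      =ᵐ[P] fun ω => (P[fun ω' => 1 - RA ω'|mX]) ω * (P[SA|mX]) ω)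
    (hMARB : P[fun ω => (1 - RB ω) * SB ω|mX]
      =ᵐ[P] fun ω => (P[fun ω' => 1 - RB ω'|mX]) ω * (P[SB|mX]) ω)
    -- ε-positivity condition for each classifier
    (ε : ℝ) (hε : 0 < ε)
    (hposA : ∀ᵐ ω ∂P, (P[RA|mX]) ω ≤ 1 - ε)
    (hposB : ∀ᵐ ω ∂P, (P[RB|mX]) ω ≤ 1 - ε)
    -- abbreviations: π•(X), μ0•(X) and Δᴬᴮ
    (πAX μ0AX πBX μ0BX : Ω → ℝ) (Δ : ℝ)
    (hπAX : πAX = P[RA|mX]) (hπBX : πBX = P[RB|mX])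
    (hμ0AX : μ0AX = fun ω => (P[fun ω' => (1 - RA ω') * SA ω'|mX]) ω / (1 - πAX ω))
    (hμ0BX : μ0BX = fun ω => (P[fun ω' => (1 - RB ω') * SB ω'|mX]) ω / (1 - πBX ω))
    (hΔ : Δ = ∫ ω, (SA ω - SB ω) ∂P)
    -- nuisance estimates, with 1 − π̂•(X) ≥ ε a.s.
    (πhatA μhatA πhatB μhatB : 𝒳 → ℝ)
    (hπhatA : Measurable πhatA) (hμhatA : Measurable μhatA)
    (hπhatB : Measurable πhatB) (hμhatB : Measurable μhatB)
    (hposA' : ∀ᵐ ω ∂P, ε ≤ 1 - πhatA (X ω))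
    (hposB' : ∀ᵐ ω ∂P, ε ≤ 1 - πhatB (X ω))
    -- all relevant differences lie in L²(P)
    (hL2πA : MemLp (fun ω => πhatA (X ω) - πAX ω) 2 P)
    (hL2μA : MemLp (fun ω => μhatA (X ω) - μ0AX ω) 2 P)
    (hL2πB : MemLp (fun ω => πhatB (X ω) - πBX ω) 2 P)
    (hL2μB : MemLp (fun ω => μhatB (X ω) - μ0BX ω) 2 P)
    -- integrability of the doubly robust functional
    (hint : Integrable (fun ω =>
      (1 - RA ω) / (1 - πhatA (X ω)) * (SA ω - μhatA (X ω)) + μhatA (X ω)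
        - ((1 - RB ω) / (1 - πhatB (X ω)) * (SB ω - μhatB (X ω)) + μhatB (X ω))) P) :
    |(∫ ω, ((1 - RA ω) / (1 - πhatA (X ω)) * (SA ω - μhatA (X ω)) + μhatA (X ω)
        - ((1 - RB ω) / (1 - πhatB (X ω)) * (SB ω - μhatB (X ω)) + μhatB (X ω))) ∂P) - Δ|
      ≤ (1 / ε) * ((eLpNorm (fun ω => πhatA (X ω) - πAX ω) 2 P).toReal
            * (eLpNorm (fun ω => μhatA (X ω) - μ0AX ω) 2 P).toReal
          + (eLpNorm (fun ω => πhatB (X ω) - πBX ω) 2 P).toReal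
            * (eLpNorm (fun ω => μhatB (X ω) - μ0BX ω) 2 P).toReal) := by
  obtain ⟨hintA, hbdA⟩ := dr_bias_single _ P X hX RA SA hRA hRA01 hSAmeas hSAint mX hmX hMARA
    ε hε hposA πAX μ0AX hπAX hμ0AX πhatA μhatA hπhatA hμhatA hposA' hL2πA hL2μA
  obtain ⟨hintB, hbdB⟩ := dr_bias_single _ P X hX RB SB hRB hRB01 hSBmeas hSBint mX hmX hMARB
    ε hε hposB πBX μ0BX hπBX hμ0BX πhatB μhatB hπhatB hμhatB hposB' hL2πB hL2μB
  have hsplit : (∫ ω, ((1 - RA ω) / (1 - πhatA (X ω)) * (SA ω - μhatA (X ω)) + μhatA (X ω)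
        - ((1 - RB ω) / (1 - πhatB (X ω)) * (SB ω - μhatB (X ω)) + μhatB (X ω))) ∂P)
      = (∫ ω, ((1 - RA ω) / (1 - πhatA (X ω)) * (SA ω - μhatA (X ω)) + μhatA (X ω)) ∂P)
        - ∫ ω, ((1 - RB ω) / (1 - πhatB (X ω)) * (SB ω - μhatB (X ω)) + μhatB (X ω)) ∂P :=
    integral_sub hintA hintB
  have hΔ' : Δ = (∫ ω, SA ω ∂P) - ∫ ω, SB ω ∂P := by
    rw [hΔ]; exact integral_sub hSAint hSBint
  rw [hsplit, hΔ', mul_add]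
  set a := (∫ ω, ((1 - RA ω) / (1 - πhatA (X ω)) * (SA ω - μhatA (X ω)) + μhatA (X ω)) ∂P)
    - ∫ ω, SA ω ∂P with ha
  set b := (∫ ω, ((1 - RB ω) / (1 - πhatB (X ω)) * (SB ω - μhatB (X ω)) + μhatB (X ω)) ∂P)
    - ∫ ω, SB ω ∂P with hb
  calc |(∫ ω, ((1 - RA ω) / (1 - πhatA (X ω)) * (SA ω - μhatA (X ω)) + μhatA (X ω)) ∂P
        - ∫ ω, ((1 - RB ω) / (1 - πhatB (X ω)) * (SB ω - μhatB (X ω)) + μhatB (X ω)) ∂P)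
        - ((∫ ω, SA ω ∂P) - ∫ ω, SB ω ∂P)| = |a - b| := by rw [ha, hb]; congr 1; ring
    _ ≤ |a| + |b| := abs_sub a b
    _ ≤ _ := add_le_add hbdA hbdB
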